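/- Let W be a complete positive ordered abelian semigroup containing a full sequence, and let p denote its largest element. Suppose W satisfies property (Q): for every u ∈ W and every positive integer m, if m·u = p then u = p. Then W satisfies the Corona Factorization Property for semigroups. -/
import Mathlib


namespace Stmt5

variable {W : Type*} [AddCommSemigroup W] [PartialOrder W]

/-- `rep n x` is the `(n+1)`-fold sum `x + x + ⋯ + x`, so that `rep n x = (n+1)·x`. -/
def rep : ℕ → W → W
  | 0, x => x
  | n + 1, x => rep n x + x

/-- `sumTo y n = y 0 + y 1 + ⋯ + y n`. -/
def sumTo (y : ℕ → W) : ℕ → W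
  | 0 => y 0
  | n + 1 => sumTo y n + y (n + 1)

/-- `x ∝ y` : `x ≤ n·y` for some positive integer `n` (encoded as `n + 1`, `n : ℕ`). -/
def Propto (x y : W) : Prop := ∃ n : ℕ, x ≤ rep n y

/-- `x <_s y` : `(k+1)·x ≤ k·y` for some positive integer `k`. -/
def StDom (x y : W) : Prop := ∃ k : ℕ, rep (k + 1) x ≤ rep k y

/-- `x ≪ y` : for every increasing sequence whose supremum exists and dominates `y`,
some term of the sequence dominates `x`. -/
def CC (x y : W) : Prop :=
  ∀ f : ℕ → W, Monotone f → ∀ s : W, IsLUB (Set.range f) s → y ≤ s → ∃ n, x ≤ f n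

/-- `W` is complete: every increasing sequence has a supremum, and `x ≤ y` holds as soon
as `x' ≤ y` for every `x' ≪ x`. -/
def Complete (W : Type*) [AddCommSemigroup W] [PartialOrder W] : Prop :=
  (∀ f : ℕ → W, Monotone f → ∃ s : W, IsLUB (Set.range f) s) ∧
    ∀ x y : W, (∀ x' : W, CC x' x → x' ≤ y) → x ≤ y

/-- A full sequence: increasing, and for all `y' ≪ y` one has `y' ∝ x n` for some `n`. -/
def FullSeq (x : ℕ → W) : Prop :=
  Monotone x ∧ ∀ y' y : W, CC y' y → ∃ n, Propto y' (x n)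

/-- A full element: `y' ∝ x` for all `y' ≪ y`. -/
def FullElem (x : W) : Prop := ∀ y' y : W, CC y' y → Propto y' x

/-- The Corona Factorization Property for semigroups: for every full sequence `(x_n)`,
every sequence `(y_n)`, every `x' ≪ x_0` and every positive integer `m` (encoded `m+1`)
with `x_n ≤ m·y_n` for all `n`, one has `x' ≤ y_0 + ⋯ + y_k` for some `k`. -/
def CFP (W : Type*) [AddCommSemigroup W] [PartialOrder W] : Prop :=
  ∀ x : ℕ → W, FullSeq x → ∀ y : ℕ → W, ∀ x' : W, ∀ m : ℕ,
    CC x' (x 0) → (∀ n, x n ≤ rep m (y n)) → ∃ k, x' ≤ sumTo y k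



section Aux

theorem add_le_add_left' (hadd : ∀ x y z : W, x ≤ y → x + z ≤ y + z)
    {b c : W} (a : W) (h : b ≤ c) : a + b ≤ a + c := by
  rw [add_comm a b, add_comm a c]; exact hadd _ _ _ h

theorem rep_mono_elem (hadd : ∀ x y z : W, x ≤ y → x + z ≤ y + z)
    (n : ℕ) {a b : W} (h : a ≤ b) : rep n a ≤ rep n b := by
  induction n with
  | zero => exact h
  | succ k ih =>
    calc rep k a + a ≤ rep k b + a := hadd _ _ _ ih
    _ ≤ rep k b + b := add_le_add_left' hadd _ h

theorem sumTo_monotone (hpos : ∀ x z : W, x ≤ x + z) (y : ℕ → W) :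
    Monotone (sumTo y) :=
  monotone_nat_of_le_succ fun k => hpos (sumTo y k) (y (k + 1))

theorem sumTo_mono_pointwise (hadd : ∀ x y z : W, x ≤ y → x + z ≤ y + z)
    {y z : ℕ → W} (h : ∀ i, y i ≤ z i) (k : ℕ) :
    sumTo y k ≤ sumTo z k := by
  induction k with
  | zero => exact h 0
  | succ n ih =>
    calc sumTo y n + y (n + 1) ≤ sumTo z n + y (n + 1) := hadd _ _ _ ih
    _ ≤ sumTo z n + z (n + 1) := add_le_add_left' hadd _ (h (n + 1))

omit [PartialOrder W] in
theorem rep_add (m : ℕ) (a b : W) : rep m (a + b) = rep m a + rep m b := by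
  induction m with
  | zero => rfl
  | succ k ih =>
    show rep k (a + b) + (a + b) = rep k a + a + (rep k b + b)
    rw [ih, add_add_add_comm]

omit [PartialOrder W] in
theorem rep_sumTo (m : ℕ) (y : ℕ → W) (k : ℕ) :
    rep m (sumTo y k) = sumTo (fun i => rep m (y i)) k := by
  induction k with
  | zero => rfl
  | succ n ih =>
    show rep m (sumTo y n + y (n + 1)) = sumTo (fun i => rep m (y i)) n + rep m (y (n + 1))
    rw [rep_add, ih]

theorem self_le_sumTo (hpos : ∀ x z : W, x ≤ x + z) (x : ℕ → W) (n : ℕ) :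
    x n ≤ sumTo x n := by
  cases n with
  | zero => exact le_rfl
  | succ k =>
    show x (k + 1) ≤ sumTo x k + x (k + 1)
    rw [add_comm (sumTo x k)]; exact hpos _ _

theorem rep_le_sumTo (hadd : ∀ x y z : W, x ≤ y → x + z ≤ y + z)
    (hpos : ∀ x z : W, x ≤ x + z)
    {x : ℕ → W} (hx : Monotone x) (n l : ℕ) :
    rep l (x n) ≤ sumTo x (n + l) := by
  induction l with
  | zero => exact self_le_sumTo hpos x n
  | succ k ih =>
    show rep k (x n) + x n ≤ sumTo x (n + k) + x (n + k + 1)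
    calc rep k (x n) + x n ≤ sumTo x (n + k) + x n := hadd _ _ _ ih
    _ ≤ sumTo x (n + k) + x (n + k + 1) :=
        add_le_add_left' hadd _ (hx (Nat.le_add_right n (k + 1)))

end Aux

/-- Property (Q) implies the Corona Factorization Property: if `W` is a complete positive
ordered abelian semigroup containing a full sequence, with largest element `p`, and if
`m·u = p` (for a positive integer `m`) implies `u = p`, then `W` satisfies the Corona
Factorization Property for semigroups. -/
theorem cfp_of_propertyQ
    (hadd : ∀ x y z : W, x ≤ y → x + z ≤ y + z)
    (hpos : ∀ x z : W, x ≤ x + z)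
    (hcomplete : Complete W)
    (hfull : ∃ x : ℕ → W, FullSeq x)
    (p : W) (hp : ∀ w : W, w ≤ p)
    (hQ : ∀ (u : W) (m : ℕ), rep m u = p → u = p) :
    CFP W := by
  intro x hxfull y x' m hcc hxy
  -- the supremum of the partial sums of y
  obtain ⟨s, hs⟩ := hcomplete.1 (sumTo y) (sumTo_monotone hpos y)
  have hsle : ∀ k, sumTo y k ≤ s := fun k => hs.1 (Set.mem_range_self k)
  -- sums of x are dominated by (m+1)·s
  have hkey : ∀ k, sumTo x k ≤ rep m s := by
    intro k
    calc sumTo x k ≤ sumTo (fun i => rep m (y i)) k :=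
          sumTo_mono_pointwise hadd hxy k
    _ = rep m (sumTo y k) := (rep_sumTo m y k).symm
    _ ≤ rep m s := rep_mono_elem hadd m (hsle k)
  -- p ≤ (m+1)·s
  have hpms : p ≤ rep m s := by
    apply hcomplete.2
    intro w hw
    obtain ⟨n, l, hnl⟩ := hxfull.2 w p hw
    calc w ≤ rep l (x n) := hnl
    _ ≤ sumTo x (n + l) := rep_le_sumTo hadd hpos hxfull.1 n l
    _ ≤ rep m s := hkey (n + l)
  have hms : rep m s = p := le_antisymm (hp _) hpms
  have hsp : s = p := hQ s m hms
  have hx0s : x 0 ≤ s := hsp ▸ hp (x 0)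
  exact hcc (sumTo y) (sumTo_monotone hpos y) s hs hx0s


end Stmt5
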